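/- Let A ∈ M^{2×2}(ℝ) with entries a_{ij}, and define the complex numbers a := (1/2)[(a₁₁ + a₂₂) + i(a₂₁ − a₁₂)] and b := (1/2)[(a₁₁ − a₂₂) + i(a₂₁ + a₁₂)] (the complex numbers representing the conformal and anticonformal parts of A). Then A ∈ K if and only if b = (4/3)a³ and |a| = 1/2. Equivalently: if F = (F₁, F₂) ∈ W^{1,∞}(Ω; ℝ²) and v(x₁ + ix₂) := F₁(x₁,x₂) + iF₂(x₁,x₂), then DF(x) ∈ K if and only if ∂v/∂z̄(z) = (4/3)(∂v/∂z(z))³ and |∂v/∂z(z)| = 1/2 at z = x₁ + ix₂. -/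

import Mathlib

open MeasureTheory Complex Filter Metric Set
open scoped Topology ENNReal NNReal

noncomputable section

def dotC (a b : ℂ) : ℝ := a.re * b.re + a.im * b.im

def pc1 (f : ℂ → ℝ) (x : ℂ) : ℝ := fderiv ℝ f x 1
def pc2 (f : ℂ → ℝ) (x : ℂ) : ℝ := fderiv ℝ f x Complex.I

def gradC (f : ℂ → ℝ) (x : ℂ) : ℂ := ⟨pc1 f x, pc2 f x⟩

def SigmaA (u : ℂ → ℝ) (x : ℂ) : ℂ :=
  ⟨pc1 u x * (1 - (pc2 u x) ^ 2 - (pc1 u x) ^ 2 / 3),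
   -(pc2 u x) * (1 - (pc1 u x) ^ 2 - (pc2 u x) ^ 2 / 3)⟩

def SigmaB (u : ℂ → ℝ) (x : ℂ) : ℂ :=
  ⟨pc2 u x * (1 - 2 * (pc2 u x) ^ 2 / 3),
   pc1 u x * (1 - 2 * (pc1 u x) ^ 2 / 3)⟩

def IsTestOn (Ω : Set ℂ) (ζ : ℂ → ℝ) : Prop :=
  ContDiff ℝ (⊤ : ℕ∞) ζ ∧ HasCompactSupport ζ ∧ tsupport ζ ⊆ Ω

def MemE (Ω : Set ℂ) (u : ℂ → ℝ) : Prop :=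
  (∃ L : ℝ≥0, LipschitzOnWith L u Ω) ∧
  (∀ᵐ x ∂(volume.restrict Ω), DifferentiableAt ℝ u x ∧ ‖gradC u x‖ = 1) ∧
  (∀ ζ : ℂ → ℝ, IsTestOn Ω ζ → ∫ x in Ω, dotC (SigmaA u x) (gradC ζ x) = 0) ∧
  (∀ ζ : ℂ → ℝ, IsTestOn Ω ζ → ∫ x in Ω, dotC (SigmaB u x) (gradC ζ x) = 0)

def IsBSCDomain (Ω : Set ℂ) : Prop :=
  IsOpen Ω ∧ IsConnected Ω ∧ Bornology.IsBounded Ω ∧ SimplyConnectedSpace Ω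

def Cpt (Ω' Ω : Set ℂ) : Prop := IsCompact (closure Ω') ∧ closure Ω' ⊆ Ω

def wz (v : ℂ → ℂ) (z : ℂ) : ℂ :=
  (2⁻¹ : ℂ) * (fderiv ℝ v z 1 - Complex.I * fderiv ℝ v z Complex.I)
def wzbar (v : ℂ → ℂ) (z : ℂ) : ℂ :=
  (2⁻¹ : ℂ) * (fderiv ℝ v z 1 + Complex.I * fderiv ℝ v z Complex.I)

def BeltramiAE (Ω : Set ℂ) (v : ℂ → ℂ) : Prop :=
  ∀ᵐ z ∂(volume.restrict Ω), DifferentiableAt ℝ v z ∧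
    wzbar v z = (4/3 : ℂ) * (wz v z) ^ 3 ∧ ‖wz v z‖ = 1/2

def mollify (ρ : ℂ → ℝ) (ε : ℝ) (x : ℂ) : ℝ := (ε ^ 2)⁻¹ * ρ (ε⁻¹ • x)

def smoothR (ρ : ℂ → ℝ) (ε : ℝ) (u : ℂ → ℝ) : ℂ → ℝ :=
  MeasureTheory.convolution (mollify ρ ε) u (ContinuousLinearMap.lsmul ℝ ℝ) volume

def smoothC (ρ : ℂ → ℝ) (ε : ℝ) (w : ℂ → ℂ) : ℂ → ℂ :=
  MeasureTheory.convolution (mollify ρ ε) w (ContinuousLinearMap.lsmul ℝ ℝ) volume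

def IsMollifier (ρ : ℂ → ℝ) : Prop :=
  ContDiff ℝ (⊤ : ℕ∞) ρ ∧ (∀ x, 0 ≤ ρ x) ∧ tsupport ρ ⊆ Metric.closedBall 0 1 ∧ (∫ x, ρ x) = 1

def dir : Fin 2 → ℂ := ![1, Complex.I]
def pd (i : Fin 2) (f : ℂ → ℝ) (x : ℂ) : ℝ := fderiv ℝ f x (dir i)
def comp2 (i : Fin 2) (z : ℂ) : ℝ := ![z.re, z.im] i

def wfun (u : ℂ → ℝ) (x : ℂ) : ℂ := Complex.I * gradC u x

def sep (s t : Set ℂ) : ℝ := ⨅ x ∈ s, Metric.infDist x t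


/-- The matrix `M(θ)`. -/
def Mmat (θ : ℝ) : Matrix (Fin 2) (Fin 2) ℝ :=
  !![(2/3) * Real.sin θ ^ 3, (2/3) * Real.cos θ ^ 3;
     -(Real.cos θ * (1 - (2/3) * Real.cos θ ^ 2)), Real.sin θ * (1 - (2/3) * Real.sin θ ^ 2)]

/-- The set `K` of matrices `M(θ)`, `θ ∈ [0, 2π)`. -/
def Kset : Set (Matrix (Fin 2) (Fin 2) ℝ) :=
  {A | ∃ θ ∈ Set.Ico (0:ℝ) (2 * Real.pi), A = Mmat θ}

/-- The Frobenius norm of a `2 × 2` real matrix. -/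
def frob (A : Matrix (Fin 2) (Fin 2) ℝ) : ℝ := Real.sqrt (∑ i, ∑ j, (A i j) ^ 2)

/-- The complex number `a = ((a₁₁+a₂₂) + i(a₂₁-a₁₂))/2` representing the conformal
part of `A`. -/
def confPart (A : Matrix (Fin 2) (Fin 2) ℝ) : ℂ :=
  ⟨(A 0 0 + A 1 1) / 2, (A 1 0 - A 0 1) / 2⟩

/-- The complex number `b = ((a₁₁-a₂₂) + i(a₂₁+a₁₂))/2` representing the
anticonformal part of `A`. -/
def aconfPart (A : Matrix (Fin 2) (Fin 2) ℝ) : ℂ :=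
  ⟨(A 0 0 - A 1 1) / 2, (A 1 0 + A 0 1) / 2⟩

/-- The matrix of the real total derivative of `v : ℂ → ℂ` at `z`. -/
def matOfDeriv (v : ℂ → ℂ) (z : ℂ) : Matrix (Fin 2) (Fin 2) ℝ :=
  !![(fderiv ℝ v z 1).re, (fderiv ℝ v z Complex.I).re;
     (fderiv ℝ v z 1).im, (fderiv ℝ v z Complex.I).im]


lemma cube_re' (z : ℂ) : ((4/3:ℂ) * z^3).re = 4/3*(z.re^3 - 3*z.re*z.im^2) := by
  simp [pow_succ, Complex.mul_re, Complex.mul_im]; ring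

lemma cube_im' (z : ℂ) : ((4/3:ℂ) * z^3).im = 4/3*(3*z.re^2*z.im - z.im^3) := by
  simp [pow_succ, Complex.mul_re, Complex.mul_im]; ring

lemma exists_angle' (w : ℂ) (hw : ‖w‖ = 1) :
    ∃ θ ∈ Set.Ico (0:ℝ) (2*Real.pi), Real.cos θ = w.re ∧ Real.sin θ = w.im := by
  have hw0 : w ≠ 0 := by intro h; simp [h] at hw
  have hc : Real.cos w.arg = w.re := by rw [Complex.cos_arg hw0, hw, div_one]
  have hs : Real.sin w.arg = w.im := by rw [Complex.sin_arg, hw, div_one]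
  rcases le_or_gt 0 w.arg with h | h
  · exact ⟨w.arg, ⟨h, lt_of_le_of_lt (Complex.arg_le_pi w)
      (by linarith [Real.pi_pos])⟩, hc, hs⟩
  · exact ⟨w.arg + 2*Real.pi, ⟨by linarith [Complex.neg_pi_lt_arg w, Real.pi_pos],
      by linarith⟩, by rw [Real.cos_add_two_pi]; exact hc,
      by rw [Real.sin_add_two_pi]; exact hs⟩

lemma part1' (A : Matrix (Fin 2) (Fin 2) ℝ) :
    A ∈ Kset ↔
      (aconfPart A = (4/3 : ℂ) * (confPart A) ^ 3 ∧ ‖confPart A‖ = 1/2) := by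
  constructor
  · rintro ⟨θ, hθ, rfl⟩
    have hsc := Real.sin_sq_add_cos_sq θ
    have hre : (confPart (Mmat θ)).re = Real.sin θ / 2 := by
      simp [confPart, Mmat]; ring
    have him : (confPart (Mmat θ)).im = -(Real.cos θ) / 2 := by
      simp [confPart, Mmat]; ring
    constructor
    · apply Complex.ext
      · rw [cube_re', hre, him]
        simp only [aconfPart, Mmat]
        simp
        linear_combination (Real.sin θ / 2) * hsc
      · rw [cube_im', hre, him]
        simp only [aconfPart, Mmat]
        simp
        linear_combination (Real.cos θ / 2) * hsc
    · have hn : Complex.normSq (confPart (Mmat θ)) = 1/4 := by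
        rw [Complex.normSq_apply, hre, him]; nlinarith [hsc]
      rw [Complex.norm_def, hn, show (1/4:ℝ) = (1/2)^2 by norm_num,
        Real.sqrt_sq (by norm_num : (0:ℝ) ≤ 1/2)]
  · rintro ⟨hb, ha⟩
    set p := (confPart A).re with hp
    set q := (confPart A).im with hq
    have hpq : p^2 + q^2 = 1/4 := by
      have h := Complex.sq_norm (confPart A)
      rw [ha, Complex.normSq_apply] at h
      rw [hp, hq]; linear_combination -h
    have hw1 : ‖Complex.I * (2 * confPart A)‖ = 1 := by
      simp [map_mul, ha]
    obtain ⟨θ, hθ, hc, hs⟩ := exists_angle' _ hw1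
    have hcre : (Complex.I * (2 * confPart A)).re = -(2*q) := by
      simp [Complex.mul_re]; rfl
    have him : (Complex.I * (2 * confPart A)).im = 2*p := by
      simp [Complex.mul_im]; rfl
    rw [hcre] at hc; rw [him] at hs
    have h1 : (A 0 0 + A 1 1)/2 = p := rfl
    have h3 : (A 1 0 - A 0 1)/2 = q := rfl
    have h2 : (A 0 0 - A 1 1)/2 = 4/3*(p^3 - 3*p*q^2) := by
      have := congrArg Complex.re hb
      rw [cube_re'] at this
      exact this
    have h4 : (A 1 0 + A 0 1)/2 = 4/3*(3*p^2*q - q^3) := by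
      have := congrArg Complex.im hb
      rw [cube_im'] at this
      exact this
    refine ⟨θ, hθ, ?_⟩
    ext i j
    fin_cases i <;> fin_cases j <;> simp [Mmat] <;> simp only [hc, hs]
    · linear_combination h1 + h2 - 4*p*hpq
    · linear_combination h4 - h3 + 4*q*hpq
    · linear_combination h3 + h4 + 4*q*hpq
    · linear_combination h1 - h2 + 4*p*hpq

lemma confPart_matOfDeriv (v : ℂ → ℂ) (z : ℂ) : confPart (matOfDeriv v z) = wz v z := by
  apply Complex.ext <;>
    simp [confPart, matOfDeriv, wz, Complex.mul_re, Complex.mul_im, Complex.div_re,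
      Complex.div_im, Complex.normSq_apply] <;> ring

lemma aconfPart_matOfDeriv (v : ℂ → ℂ) (z : ℂ) : aconfPart (matOfDeriv v z) = wzbar v z := by
  apply Complex.ext <;>
    simp [aconfPart, matOfDeriv, wzbar, Complex.mul_re, Complex.mul_im, Complex.div_re,
      Complex.div_im, Complex.normSq_apply] <;> ring

/-- membership in `K` is equivalent to the constrained non-linear
Beltrami relation `b = (4/3)a³`, `|a| = 1/2`, both at the level of matrices and at
the level of Lipschitz maps `v = F₁ + iF₂`. -/
theorem stmt5 :
    (∀ A : Matrix (Fin 2) (Fin 2) ℝ,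
      A ∈ Kset ↔
        (aconfPart A = (4/3 : ℂ) * (confPart A) ^ 3 ∧ ‖confPart A‖ = 1/2)) ∧
    (∀ (Ω : Set ℂ) (v : ℂ → ℂ), (∃ L : ℝ≥0, LipschitzOnWith L v Ω) →
      ∀ z ∈ Ω, DifferentiableAt ℝ v z →
        (matOfDeriv v z ∈ Kset ↔
          (wzbar v z = (4/3 : ℂ) * (wz v z) ^ 3 ∧ ‖wz v z‖ = 1/2))) := by
  refine ⟨part1', fun Ω v _ z _ _ => ?_⟩
  rw [part1', confPart_matOfDeriv, aconfPart_matOfDeriv]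

end
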